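/- (Corollary 2.3, Mean Stochastic Model parameters are optimal) Fix real numbers a11, a12, a21, a22, σx, σy with a22 ≠ 0 and ã < 0. Let ε₀ > 0 and let Tx, Vx : (0, ε₀) → ℝ be functions satisfying, as ε → 0⁺, Tx(ε) = −1/(ã*(1 − ε*â)) + O(ε²) (the correlation time of the slow variable) and Vx(ε) = −σs(ε)²/(2*ã*(1 − ε*â)) + O(ε²) (the equilibrium variance of the slow variable), with Tx(ε) ≥ T₀ for some constant T₀ > 0. Define the Mean Stochastic Model parameters a(ε) := −1/Tx(ε) and σX²(ε) := −2*a(ε)*Vx(ε). Then a(ε) = ã*(1 − ε*â) + O(ε²) and σX²(ε) = σs(ε)² + O(ε²) as ε → 0⁺. -/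

import Mathlib

/-- `f = O(ε²)` as `ε → 0⁺`, with the bound holding inside `(0, ε₀)`. -/
def IsO2 (ε₀ : ℝ) (f : ℝ → ℝ) : Prop :=
  ∃ C ε₁ : ℝ, 0 < C ∧ 0 < ε₁ ∧ ε₁ ≤ ε₀ ∧ ∀ ε, 0 < ε → ε < ε₁ → |f ε| ≤ C * ε ^ 2

/-- `σs(ε)² := σx²(1 − 2εâ) + ε σy² a12²/a22²`. -/
noncomputable def sigs (a12 a21 a22 σx σy ε : ℝ) : ℝ :=
  σx ^ 2 * (1 - 2 * ε * (a12 * a21 / a22 ^ 2)) + ε * σy ^ 2 * a12 ^ 2 / a22 ^ 2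

lemma aux1 (A B ε₀ T₀ : ℝ) (hA : A < 0) (hT₀ : 0 < T₀) (Tx : ℝ → ℝ)
    (hT : ∀ ε, 0 < ε → ε < ε₀ → T₀ ≤ Tx ε)
    (hTas : IsO2 ε₀ (fun ε => Tx ε + 1 / (A * (1 - ε * B)))) :
    IsO2 ε₀ (fun ε => (-1 / Tx ε) - A * (1 - ε * B)) := by
  obtain ⟨C, ε₁, hC, hε₁, hle, hf⟩ := hTas
  have hA' : (0:ℝ) < -A := by linarith
  have hB : (0:ℝ) ≤ |B| := abs_nonneg B
  refine ⟨C * (-A) * (1 + |B|) / T₀, min ε₁ (1 / (2 * (|B| + 1))), ?_, ?_, ?_, ?_⟩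
  · apply div_pos _ hT₀
    apply mul_pos (mul_pos hC hA')
    linarith
  · exact lt_min hε₁ (by positivity)
  · exact le_trans (min_le_left _ _) hle
  · intro ε hε hεlt
    have hε1 : ε < ε₁ := lt_of_lt_of_le hεlt (min_le_left _ _)
    have hεs : ε < 1 / (2 * (|B| + 1)) := lt_of_lt_of_le hεlt (min_le_right _ _)
    have hεε₀ : ε < ε₀ := lt_of_lt_of_le hε1 hle
    have hTx := hT ε hε hεε₀
    have hTxpos : 0 < Tx ε := lt_of_lt_of_le hT₀ hTx
    have key : ε * (2 * (|B| + 1)) < 1 := (lt_div_iff₀ (by positivity)).mp hεs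
    have hεabsB : ε * B ≤ ε * |B| :=
      mul_le_mul_of_nonneg_left (le_abs_self B) hε.le
    have hεabsB' : -(ε * |B|) ≤ ε * B := by
      have := mul_le_mul_of_nonneg_left (neg_abs_le B) hε.le
      linarith
    have hεB : ε * B ≤ 1 / 2 := by nlinarith
    have hεle1 : ε ≤ 1 := by nlinarith
    have h1e : (1:ℝ) / 2 ≤ 1 - ε * B := by linarith
    have h1u : 1 - ε * B ≤ 1 + |B| := by nlinarith
    have hDneg : A * (1 - ε * B) < 0 := mul_neg_of_neg_of_pos hA (by linarith)
    have hf' := hf ε hε hε1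
    simp only at hf' ⊢
    have hDne : A * (1 - ε * B) ≠ 0 := ne_of_lt hDneg
    have hid : (-1 / Tx ε) - A * (1 - ε * B)
        = -(A * (1 - ε * B)) * (Tx ε + 1 / (A * (1 - ε * B))) / Tx ε := by
      field_simp [hDne, hA.ne]
      ring
    rw [hid, abs_div, abs_mul, abs_neg, abs_of_pos hTxpos]
    have hDabs : |A * (1 - ε * B)| ≤ (-A) * (1 + |B|) := by
      rw [abs_mul, abs_of_neg hA, abs_of_pos (show (0:ℝ) < 1 - ε * B by linarith)]
      nlinarith
    calc |A * (1 - ε * B)| * |Tx ε + 1 / (A * (1 - ε * B))| / Tx ε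
        ≤ ((-A) * (1 + |B|)) * (C * ε ^ 2) / T₀ := by
          apply div_le_div₀ (by positivity) _ hT₀ hTx
          exact mul_le_mul hDabs hf' (abs_nonneg _) (by positivity)
      _ = C * (-A) * (1 + |B|) / T₀ * ε ^ 2 := by ring

lemma aux2 (A B ε₀ M : ℝ) (hA : A < 0) (hM : 0 ≤ M) (Tx Vx σ : ℝ → ℝ)
    (hσ : ∀ ε, 0 < ε → ε < ε₀ → |σ ε| ≤ M)
    (hVas : IsO2 ε₀ (fun ε => Vx ε + σ ε / (2 * A * (1 - ε * B))))
    (h1 : IsO2 ε₀ (fun ε => (-1 / Tx ε) - A * (1 - ε * B))) :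
    IsO2 ε₀ (fun ε => (-2 * (-1 / Tx ε) * Vx ε) - σ ε) := by
  obtain ⟨C2, δ2, hC2, hδ2, hδ2le, hg⟩ := hVas
  obtain ⟨C1, δ1, hC1, hδ1, hδ1le, hh⟩ := h1
  have hA' : (0:ℝ) < -A := by linarith
  have hB : (0:ℝ) ≤ |B| := abs_nonneg B
  refine ⟨2 * ((-A) * (1 + |B|)) * C2 + 2 * C1 * (M / (-A) + C2),
    min (min δ1 δ2) (1 / (2 * (|B| + 1))), ?_, ?_, ?_, ?_⟩
  · have h1 : 0 < 2 * ((-A) * (1 + |B|)) * C2 := by positivity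
    have h2 : 0 < M / (-A) + C2 := by positivity
    have h3 : 0 < 2 * C1 * (M / (-A) + C2) := by positivity
    linarith
  · exact lt_min (lt_min hδ1 hδ2) (by positivity)
  · exact le_trans (min_le_left _ _) (le_trans (min_le_left _ _) hδ1le)
  · intro ε hε hεlt
    have hεδ1 : ε < δ1 := lt_of_lt_of_le hεlt (le_trans (min_le_left _ _) (min_le_left _ _))
    have hεδ2 : ε < δ2 := lt_of_lt_of_le hεlt (le_trans (min_le_left _ _) (min_le_right _ _))
    have hεs : ε < 1 / (2 * (|B| + 1)) := lt_of_lt_of_le hεlt (min_le_right _ _)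
    have hεε₀ : ε < ε₀ := lt_of_lt_of_le hεδ1 hδ1le
    have key : ε * (2 * (|B| + 1)) < 1 := (lt_div_iff₀ (by positivity)).mp hεs
    have hεabsB : ε * B ≤ ε * |B| :=
      mul_le_mul_of_nonneg_left (le_abs_self B) hε.le
    have hεB : ε * B ≤ 1 / 2 := by nlinarith
    have hεle1 : ε ≤ 1 := by nlinarith
    have h1e : (1:ℝ) / 2 ≤ 1 - ε * B := by linarith
    have hεabsB' : -(ε * |B|) ≤ ε * B := by
      have := mul_le_mul_of_nonneg_left (neg_abs_le B) hε.le
      linarith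
    have h1u : 1 - ε * B ≤ 1 + |B| := by nlinarith
    have hDneg : A * (1 - ε * B) < 0 := mul_neg_of_neg_of_pos hA (by linarith)
    have hDne : A * (1 - ε * B) ≠ 0 := ne_of_lt hDneg
    have hg' := hg ε hε hεδ2
    have hh' := hh ε hε hεδ1
    have hσ' := hσ ε hε hεε₀
    simp only at hg' hh' ⊢
    have hDabs : |A * (1 - ε * B)| ≤ (-A) * (1 + |B|) := by
      rw [abs_mul, abs_of_neg hA, abs_of_pos (show (0:ℝ) < 1 - ε * B by linarith)]
      nlinarith
    have hDlow : -A ≤ |2 * (A * (1 - ε * B))| := by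
      rw [abs_mul, abs_mul, abs_of_neg hA, abs_of_pos (show (0:ℝ) < 1 - ε * B by linarith)]
      have : |(2:ℝ)| = 2 := by norm_num
      rw [this]
      nlinarith
    -- bound on |Vx ε|
    have hVb : |Vx ε| ≤ M / (-A) + C2 := by
      have htri : |Vx ε| ≤ |Vx ε + σ ε / (2 * A * (1 - ε * B))| + |σ ε / (2 * A * (1 - ε * B))| := by
        have := abs_add_le (Vx ε + σ ε / (2 * A * (1 - ε * B))) (-(σ ε / (2 * A * (1 - ε * B))))
        simpa using this
      have hq : |σ ε / (2 * A * (1 - ε * B))| ≤ M / (-A) := by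
        rw [show (2 * A * (1 - ε * B)) = 2 * (A * (1 - ε * B)) by ring, abs_div]
        exact div_le_div₀ hM hσ' hA' hDlow
      have hsq : ε ^ 2 ≤ 1 := pow_le_one₀ hε.le hεle1
      have hε2 : C2 * ε ^ 2 ≤ C2 := mul_le_of_le_one_right hC2.le hsq
      linarith
    have h2Dne : 2 * A * (1 - ε * B) ≠ 0 := by
      intro h; exact hDne (by linear_combination h / 2)
    have hkey : (-2 * (A * (1 - ε * B))) * (σ ε / (2 * A * (1 - ε * B))) = -σ ε := by
      have hmc := mul_div_cancel₀ (σ ε) h2Dne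
      linear_combination (-1 : ℝ) * hmc
    have hid2 : (-2 * (-1 / Tx ε) * Vx ε) - σ ε
        = (-2 * (A * (1 - ε * B)) * (Vx ε + σ ε / (2 * A * (1 - ε * B))))
          + (-2 * ((-1 / Tx ε) - A * (1 - ε * B)) * Vx ε) := by
      linear_combination (-1 : ℝ) * hkey
    rw [hid2]
    have b1 : |(-2 * (A * (1 - ε * B)) * (Vx ε + σ ε / (2 * A * (1 - ε * B))))|
        ≤ 2 * ((-A) * (1 + |B|)) * (C2 * ε ^ 2) := by
      rw [abs_mul, abs_mul]
      have h2 : |(-2:ℝ)| = 2 := by norm_num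
      rw [h2]
      have hm := mul_le_mul hDabs hg' (abs_nonneg _) (by positivity : (0:ℝ) ≤ (-A) * (1 + |B|))
      linarith [hm]
    have b2 : |(-2 * ((-1 / Tx ε) - A * (1 - ε * B)) * Vx ε)|
        ≤ 2 * (C1 * ε ^ 2) * (M / (-A) + C2) := by
      rw [abs_mul, abs_mul]
      have h2 : |(-2:ℝ)| = 2 := by norm_num
      rw [h2]
      have hm := mul_le_mul hh' hVb (abs_nonneg _) (by positivity : (0:ℝ) ≤ C1 * ε ^ 2)
      linarith [hm]
    calc |(-2 * (A * (1 - ε * B)) * (Vx ε + σ ε / (2 * A * (1 - ε * B))))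
          + (-2 * ((-1 / Tx ε) - A * (1 - ε * B)) * Vx ε)|
        ≤ |(-2 * (A * (1 - ε * B)) * (Vx ε + σ ε / (2 * A * (1 - ε * B))))|
          + |(-2 * ((-1 / Tx ε) - A * (1 - ε * B)) * Vx ε)| := abs_add_le _ _
      _ ≤ 2 * ((-A) * (1 + |B|)) * (C2 * ε ^ 2) + 2 * (C1 * ε ^ 2) * (M / (-A) + C2) := by
          linarith
      _ = (2 * ((-A) * (1 + |B|)) * C2 + 2 * C1 * (M / (-A) + C2)) * ε ^ 2 := by ring

/-- Corollary 2.3: the Mean Stochastic Model parameters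
`a(ε) := −1/Tx(ε)` and `σX²(ε) := −2 a(ε) Vx(ε)` satisfy
`a(ε) = ã(1 − εâ) + O(ε²)` and `σX²(ε) = σs(ε)² + O(ε²)` as `ε → 0⁺`. -/
theorem stmt13 (a11 a12 a21 a22 σx σy : ℝ) (ha22 : a22 ≠ 0)
    (hat : a11 - a12 * a21 / a22 < 0)
    (ε₀ : ℝ) (hε₀ : 0 < ε₀) (Tx Vx : ℝ → ℝ)
    (T₀ : ℝ) (hT₀ : 0 < T₀) (hT : ∀ ε, 0 < ε → ε < ε₀ → T₀ ≤ Tx ε)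
    (hTas : IsO2 ε₀ (fun ε =>
      Tx ε + 1 / ((a11 - a12 * a21 / a22) * (1 - ε * (a12 * a21 / a22 ^ 2)))))
    (hVas : IsO2 ε₀ (fun ε =>
      Vx ε + sigs a12 a21 a22 σx σy ε
        / (2 * (a11 - a12 * a21 / a22) * (1 - ε * (a12 * a21 / a22 ^ 2))))) :
    IsO2 ε₀ (fun ε =>
        (-1 / Tx ε) - (a11 - a12 * a21 / a22) * (1 - ε * (a12 * a21 / a22 ^ 2))) ∧
      IsO2 ε₀ (fun ε =>
        (-2 * (-1 / Tx ε) * Vx ε) - sigs a12 a21 a22 σx σy ε) := by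
  set A := a11 - a12 * a21 / a22 with hAdef
  set B := a12 * a21 / a22 ^ 2 with hBdef
  have h1 : IsO2 ε₀ (fun ε => (-1 / Tx ε) - A * (1 - ε * B)) :=
    aux1 A B ε₀ T₀ hat hT₀ Tx hT hTas
  refine ⟨h1, ?_⟩
  set M := σx ^ 2 * (1 + 2 * ε₀ * |B|) + ε₀ * σy ^ 2 * a12 ^ 2 / a22 ^ 2 with hMdef
  have hM : 0 ≤ M := by positivity
  have hσ : ∀ ε, 0 < ε → ε < ε₀ → |sigs a12 a21 a22 σx σy ε| ≤ M := by
    intro ε hε hεlt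
    rw [sigs]
    have h1' : |σx ^ 2 * (1 - 2 * ε * B)| ≤ σx ^ 2 * (1 + 2 * ε₀ * |B|) := by
      rw [abs_mul, abs_of_nonneg (by positivity : (0:ℝ) ≤ σx ^ 2)]
      have hb : |1 - 2 * ε * B| ≤ 1 + 2 * ε₀ * |B| := by
        have := abs_sub (1:ℝ) (2 * ε * B)
        have h2 : |2 * ε * B| ≤ 2 * ε₀ * |B| := by
          rw [abs_mul, abs_mul]
          have : |(2:ℝ)| = 2 := by norm_num
          rw [this, abs_of_pos hε]
          nlinarith [abs_nonneg B]
        simp only [abs_one] at this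
        linarith
      nlinarith [sq_nonneg σx, abs_nonneg (1 - 2 * ε * B)]
    have h2' : |ε * σy ^ 2 * a12 ^ 2 / a22 ^ 2| ≤ ε₀ * σy ^ 2 * a12 ^ 2 / a22 ^ 2 := by
      rw [abs_of_nonneg (by positivity)]
      have hc : (0:ℝ) ≤ σy ^ 2 * a12 ^ 2 / a22 ^ 2 := by positivity
      calc ε * σy ^ 2 * a12 ^ 2 / a22 ^ 2 = ε * (σy ^ 2 * a12 ^ 2 / a22 ^ 2) := by ring
        _ ≤ ε₀ * (σy ^ 2 * a12 ^ 2 / a22 ^ 2) := by nlinarith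
        _ = ε₀ * σy ^ 2 * a12 ^ 2 / a22 ^ 2 := by ring
    calc |σx ^ 2 * (1 - 2 * ε * B) + ε * σy ^ 2 * a12 ^ 2 / a22 ^ 2|
        ≤ |σx ^ 2 * (1 - 2 * ε * B)| + |ε * σy ^ 2 * a12 ^ 2 / a22 ^ 2| := abs_add_le _ _
      _ ≤ M := by rw [hMdef]; linarith
  exact aux2 A B ε₀ M hat hM Tx Vx (fun ε => sigs a12 a21 a22 σx σy ε) hσ hVas h1
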